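/- arXiv:2205.02518 — 5 statements merged into one kernel-verified Lean document; each statement's English description precedes it below -/
import Mathlib

section
/- Let N ≥ 1, s ∈ (1/2,1) and c₀ > 0. Let F : ℝ → ℝ be a measurable function such that for every τ ∈ ℝ, ∫_ℝ |F(r) − F(τ)| / |r − τ|^{2 − 1/(2s)} dr ≤ c₀ · min(1, 1/|τ|). Define K : (ℝ^N \ {0}) × ℝ → ℝ by K(x,t) = |x|^{-N} F(t/|x|^{2s}). Then for every x ∈ ℝ^N with x ≠ 0 and every t ∈ ℝ, ∫_ℝ |K(x,r) − K(x,t)| / |r − t|^{2 − 1/(2s)} dr ≤ c₀ / (|x|^{N−1} · max(|x|, |t|^{1/(2s)})^{2s}). -/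
open MeasureTheory
open scoped ENNReal

/-! Substituting `r = |x|^{2s} u` pulls out the factor `|x|^{-N} (|x|^{2s})^{1-p}`, `p = 2 - 1/(2s)`,
and moves `t` to `τ = t/|x|^{2s}`. The hypothesis at `τ` then gives the bound, since
`min(1, 1/|τ|) = |x|^{2s} / max(|x|^{2s}, |t|)` and `(|x|^{2s})^{2-p} = |x|`. -/

theorem lintegral_comp_div_const (g : ℝ → ℝ≥0∞) {c : ℝ} (hc : 0 < c) :
    ∫⁻ r : ℝ, g (r / c) = ENNReal.ofReal c * ∫⁻ u : ℝ, g u := by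
  simp_rw [div_eq_inv_mul]
  rw [← (measurableEmbedding_mulLeft₀ (inv_ne_zero hc.ne')).lintegral_map,
    Real.map_volume_mul_left (inv_ne_zero hc.ne'), lintegral_smul_measure, inv_inv,
    abs_of_pos hc, smul_eq_mul]

/-- For `p = 1 + α` this is the absolute integral in the fractional derivative `∂^α F (τ)`. -/
noncomputable def fracDiffLIntegral (p : ℝ) (F : ℝ → ℝ) (τ : ℝ) : ℝ≥0∞ :=
  ∫⁻ r : ℝ, ENNReal.ofReal (|F r - F τ| / |r - τ| ^ p)

theorem fracDiffLIntegral_const_mul (p A : ℝ) (F : ℝ → ℝ) (τ : ℝ) :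
    fracDiffLIntegral p (fun r => A * F r) τ = ENNReal.ofReal |A| * fracDiffLIntegral p F τ := by
  unfold fracDiffLIntegral
  simp_rw [← mul_sub, abs_mul, mul_div_assoc, ENNReal.ofReal_mul (abs_nonneg A)]
  exact lintegral_const_mul' _ _ ENNReal.ofReal_ne_top

theorem fracDiffLIntegral_comp_div (p : ℝ) (F : ℝ → ℝ) (t : ℝ) {c : ℝ} (hc : 0 < c) :
    fracDiffLIntegral p (fun r => F (r / c)) t =
      ENNReal.ofReal (c ^ (1 - p)) * fracDiffLIntegral p F (t / c) := by
  have hdist (r : ℝ) : |r - t| ^ p = c ^ p * |r / c - t / c| ^ p := by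
    rw [← sub_div, abs_div, abs_of_pos hc, Real.div_rpow (abs_nonneg _) hc.le,
      mul_div_cancel₀ _ (Real.rpow_pos_of_pos hc p).ne']
  have hpt (r : ℝ) : ENNReal.ofReal (|F (r / c) - F (t / c)| / |r - t| ^ p) =
      ENNReal.ofReal (c ^ (-p)) * ENNReal.ofReal (|F (r / c) - F (t / c)| / |r / c - t / c| ^ p) := by
    rw [← ENNReal.ofReal_mul (by positivity), hdist, Real.rpow_neg hc.le]
    ring_nf
  have hpow : c ^ (1 - p) = c ^ (-p) * c := by
    rw [sub_eq_neg_add, Real.rpow_add hc, Real.rpow_one]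
  unfold fracDiffLIntegral
  simp_rw [hpt]
  rw [lintegral_const_mul' _ _ ENNReal.ofReal_ne_top,
    lintegral_comp_div_const (fun u => ENNReal.ofReal (|F u - F (t / c)| / |u - t / c| ^ p)) hc,
    hpow, ENNReal.ofReal_mul (by positivity), mul_assoc]

theorem min_one_inv_ofReal_abs_div {c : ℝ} (hc : 0 < c) (t : ℝ) :
    min 1 (ENNReal.ofReal |t / c|)⁻¹ = ENNReal.ofReal (c / max c |t|) := by
  rw [abs_div, abs_of_pos hc]
  rcases le_total |t| c with ht | ht
  · rw [max_eq_left ht, div_self hc.ne', ENNReal.ofReal_one, min_eq_left]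
    rw [ENNReal.one_le_inv, ENNReal.ofReal_le_one]
    exact div_le_one_of_le₀ ht hc.le
  · have ht0 : 0 < |t| / c := div_pos (hc.trans_le ht) hc
    rw [max_eq_right ht, ← ENNReal.ofReal_inv_of_pos ht0, inv_div, min_eq_right]
    exact ENNReal.ofReal_le_one.mpr (div_le_one_of_le₀ ht (abs_nonneg t))

theorem max_abs_rpow_one_div_rpow {a : ℝ} (ha : 0 ≤ a) (t : ℝ) {q : ℝ} (hq : 0 < q) :
    max a (|t| ^ (1 / q)) ^ q = max (a ^ q) |t| := by
  rw [Real.rpow_max ha (by positivity) hq.le, one_div, Real.rpow_inv_rpow (abs_nonneg t) hq.ne']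

theorem stmt5_general (N : ℕ) (hN : 1 ≤ N) (s : ℝ) (hs : 1 / 2 < s)
    (c₀ : ℝ) (F : ℝ → ℝ)
    (hF : ∀ τ : ℝ,
      (∫⁻ r : ℝ, ENNReal.ofReal (|F r - F τ| / |r - τ| ^ (2 - 1 / (2 * s)))) ≤
        ENNReal.ofReal c₀ * min 1 (ENNReal.ofReal |τ|)⁻¹) :
    ∀ (x : EuclideanSpace ℝ (Fin N)), x ≠ 0 → ∀ t : ℝ,
      (∫⁻ r : ℝ, ENNReal.ofReal
          (|(‖x‖ ^ N)⁻¹ * F (r / ‖x‖ ^ (2 * s)) - (‖x‖ ^ N)⁻¹ * F (t / ‖x‖ ^ (2 * s))| /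
            |r - t| ^ (2 - 1 / (2 * s)))) ≤
        ENNReal.ofReal (c₀ / (‖x‖ ^ (N - 1) * (max ‖x‖ (|t| ^ (1 / (2 * s)))) ^ (2 * s))) := by
  intro x hx t
  have hq : 0 < 2 * s := by linarith
  rw [max_abs_rpow_one_div_rpow (norm_nonneg x) t hq]
  set a := ‖x‖
  set p := 2 - 1 / (2 * s)
  set c := a ^ (2 * s)
  have ha : 0 < a := norm_pos_iff.mpr hx
  have hc : 0 < c := Real.rpow_pos_of_pos ha _
  have hca : c ^ (1 - p) * c = a := by
    have hexp : 1 - p + 1 = (2 * s)⁻¹ := by simp only [p]; ring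
    rw [← Real.rpow_add_one hc.ne', hexp, Real.rpow_rpow_inv ha.le hq.ne']
  clear_value a p c
  have hscale : fracDiffLIntegral p (fun r => (a ^ N)⁻¹ * F (r / c)) t =
      ENNReal.ofReal (a ^ N)⁻¹ * (ENNReal.ofReal (c ^ (1 - p)) * fracDiffLIntegral p F (t / c)) := by
    rw [fracDiffLIntegral_const_mul p _ (fun r => F (r / c)), fracDiffLIntegral_comp_div _ _ _ hc,
      abs_of_pos (inv_pos.mpr (pow_pos ha N))]
  calc _ = ENNReal.ofReal (a ^ N)⁻¹ *
          (ENNReal.ofReal (c ^ (1 - p)) * fracDiffLIntegral p F (t / c)) := hscale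
    _ ≤ ENNReal.ofReal (a ^ N)⁻¹ * (ENNReal.ofReal (c ^ (1 - p)) *
          (ENNReal.ofReal c₀ * ENNReal.ofReal (c / max c |t|))) := by
        rw [← min_one_inv_ofReal_abs_div hc]
        gcongr
        exact hF _
    _ = _ := by
        rw [← ENNReal.ofReal_mul' (by positivity),
          ← ENNReal.ofReal_mul (by positivity), ← ENNReal.ofReal_mul (by positivity)]
        congr 1
        rw [show (a ^ N)⁻¹ * (c ^ (1 - p) * (c₀ * (c / max c |t|))) =
          (a ^ N)⁻¹ * (c ^ (1 - p) * c) * c₀ / max c |t| by ring, hca,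
          ← pow_sub_one_mul (by omega : N ≠ 0)]
        field_simp

/-- Let `N ≥ 1`, `s ∈ (1/2,1)`, `c₀ > 0` and let `F : ℝ → ℝ` be measurable
with `∫ |F(r) − F(τ)|/|r−τ|^{2−1/(2s)} dr ≤ c₀ min(1, 1/|τ|)` for every `τ`
(right-hand side in `[0,∞]`, so `1/|0| = ∞`). Define `K(x,t) = |x|^{-N} F(t/|x|^{2s})`
for `x ≠ 0`. Then for every `x ≠ 0` and `t ∈ ℝ`,
`∫ |K(x,r) − K(x,t)|/|r−t|^{2−1/(2s)} dr ≤ c₀ / (|x|^{N−1} max(|x|,|t|^{1/(2s)})^{2s})`. -/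
theorem stmt5 (N : ℕ) (hN : 1 ≤ N) (s : ℝ) (hs : 1 / 2 < s) (hs1 : s < 1)
    (c₀ : ℝ) (hc₀ : 0 < c₀) (F : ℝ → ℝ) (hFmeas : Measurable F)
    (hF : ∀ τ : ℝ,
      (∫⁻ r : ℝ, ENNReal.ofReal (|F r - F τ| / |r - τ| ^ (2 - 1 / (2 * s)))) ≤
        ENNReal.ofReal c₀ * min 1 (ENNReal.ofReal |τ|)⁻¹) :
    ∀ (x : EuclideanSpace ℝ (Fin N)), x ≠ 0 → ∀ t : ℝ,
      (∫⁻ r : ℝ, ENNReal.ofReal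
          (|(‖x‖ ^ N)⁻¹ * F (r / ‖x‖ ^ (2 * s)) - (‖x‖ ^ N)⁻¹ * F (t / ‖x‖ ^ (2 * s))| /
            |r - t| ^ (2 - 1 / (2 * s)))) ≤
        ENNReal.ofReal (c₀ / (‖x‖ ^ (N - 1) * (max ‖x‖ (|t| ^ (1 / (2 * s)))) ^ (2 * s))) :=
  stmt5_general N hN s hs c₀ F hF
end

section
/- Let N ≥ 1. There is a constant C > 0, depending only on N, such that for every positive Borel measure μ on ℝ^{N+1} whose potential satisfies P*μ(x̄) = ∫ P(x̄ − ȳ) dμ(ȳ) ≤ 1 for every x̄ ∈ ℝ^{N+1}, one has μ(B(x̄, r)) ≤ C r^N for every x̄ ∈ ℝ^{N+1} and every r > 0, where B(x̄, r) is the Euclidean ball. -/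
open MeasureTheory
open scoped ENNReal

/-- The 1/2-fractional heat kernel on `ℝ^{N+1}`, the last coordinate playing the role
of time: `P(x,t) = t/(t² + |x|²)^{(N+1)/2} = t/‖(x,t)‖^{N+1}` for `t > 0`, else `0`. -/
noncomputable def PH (N : ℕ) (z : EuclideanSpace ℝ (Fin (N + 1))) : ℝ :=
  if 0 < z (Fin.last N) then z (Fin.last N) / ‖z‖ ^ (N + 1) else 0

lemma coord_abs_le_norm {n : ℕ} (v : EuclideanSpace ℝ (Fin n)) (i : Fin n) :
    |v i| ≤ ‖v‖ := by
  rw [EuclideanSpace.norm_eq, ← Real.sqrt_sq_eq_abs]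
  apply Real.sqrt_le_sqrt
  have := Finset.single_le_sum (f := fun j => ‖v j‖ ^ 2)
    (fun j _ => sq_nonneg _) (Finset.mem_univ i)
  simpa [Real.norm_eq_abs, sq_abs] using this

/-- For `N ≥ 1` there is `C > 0`, depending only on `N`, such that any
positive Borel measure `μ` on `ℝ^{N+1}` with `P*μ ≤ 1` everywhere satisfies
`μ(B(x̄,r)) ≤ C r^N` for all `x̄` and `r > 0` (Euclidean balls). -/
theorem stmt6 (N : ℕ) (hN : 1 ≤ N) :
    ∃ C : ℝ, 0 < C ∧
      ∀ μ : Measure (EuclideanSpace ℝ (Fin (N + 1))),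
        (∀ x, (∫⁻ y, ENNReal.ofReal (PH N (x - y)) ∂μ) ≤ 1) →
        ∀ (x : EuclideanSpace ℝ (Fin (N + 1))) (r : ℝ), 0 < r →
          μ (Metric.ball x r) ≤ ENNReal.ofReal (C * r ^ N) := by
  refine ⟨3 ^ (N + 1), by positivity, ?_⟩
  intro μ hμ x r hr
  set e : EuclideanSpace ℝ (Fin (N + 1)) := EuclideanSpace.single (Fin.last N) (2 * r) with he
  set z : EuclideanSpace ℝ (Fin (N + 1)) := x + e with hz
  set c : ℝ := r / (3 * r) ^ (N + 1) with hc
  have hc0 : (0 : ℝ) < c := by positivity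
  have key : ∀ y ∈ Metric.ball x r,
      ENNReal.ofReal c ≤ ENNReal.ofReal (PH N (z - y)) := by
    intro y hy
    have hxy : ‖x - y‖ < r := by
      rw [← dist_eq_norm]
      exact Metric.mem_ball'.mp hy
    have hcoord : |(x - y) (Fin.last N)| ≤ ‖x - y‖ := coord_abs_le_norm _ _
    have happ : (z - y) (Fin.last N) = (x - y) (Fin.last N) + 2 * r := by
      simp [hz, he, EuclideanSpace.single_apply]
      ring
    have ht : r ≤ (z - y) (Fin.last N) := by
      rw [happ]
      have := abs_le.mp hcoord
      linarith
    have htpos : 0 < (z - y) (Fin.last N) := lt_of_lt_of_le hr ht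
    have hnorm_ge : r ≤ ‖z - y‖ := by
      have := coord_abs_le_norm (z - y) (Fin.last N)
      have := le_abs_self ((z - y) (Fin.last N))
      linarith
    have hnorm_le : ‖z - y‖ ≤ 3 * r := by
      have h1 : z - y = (x - y) + e := by
        rw [hz]; abel
      have h2 : ‖e‖ = 2 * r := by
        rw [he, EuclideanSpace.norm_single]
        rw [Real.norm_eq_abs, abs_of_pos (by linarith)]
      calc ‖z - y‖ ≤ ‖x - y‖ + ‖e‖ := by rw [h1]; exact norm_add_le _ _
        _ ≤ r + 2 * r := by rw [h2]; linarith
        _ = 3 * r := by ring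
    apply ENNReal.ofReal_le_ofReal
    rw [PH, if_pos htpos, hc]
    apply div_le_div₀ htpos.le ht (pow_pos (lt_of_lt_of_le hr hnorm_ge) _)
    exact pow_le_pow_left₀ (norm_nonneg _) hnorm_le _
  have h1 : ENNReal.ofReal c * μ (Metric.ball x r) ≤ 1 := by
    calc ENNReal.ofReal c * μ (Metric.ball x r)
        = ∫⁻ y, (Metric.ball x r).indicator (fun _ => ENNReal.ofReal c) y ∂μ := by
          rw [lintegral_indicator_const measurableSet_ball]
      _ ≤ ∫⁻ y, ENNReal.ofReal (PH N (z - y)) ∂μ := by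
          apply lintegral_mono
          intro y
          by_cases h : y ∈ Metric.ball x r
          · simpa [h] using key y h
          · simp [h]
      _ ≤ 1 := hμ z
  have hcne : ENNReal.ofReal c ≠ 0 := by
    positivity
  have hmu : μ (Metric.ball x r) ≤ 1 / ENNReal.ofReal c := by
    rw [ENNReal.le_div_iff_mul_le (Or.inl hcne) (Or.inl ENNReal.ofReal_ne_top)]
    rwa [mul_comm]
  refine hmu.trans ?_
  rw [one_div, ← ENNReal.ofReal_inv_of_pos hc0]
  apply ENNReal.ofReal_le_ofReal
  rw [hc]
  have : (r / (3 * r) ^ (N + 1))⁻¹ = 3 ^ (N + 1) * r ^ N := by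
    rw [inv_div, mul_pow]
    rw [pow_succ 3 N]  -- not needed maybe
    field_simp
    ring
  rw [this]
end

section
/- Let N ≥ 1. There is a constant C > 0, depending only on N, such that for every compact set E ⊂ ℝ^{N+1} and every positive Borel measure μ supported on E whose potential satisfies P*μ(x̄) = ∫ P(x̄ − ȳ) dμ(ȳ) ≤ 1 for all x̄ ∈ ℝ^{N+1}, one has μ(E) ≤ C · H^N_∞(E). In particular, the capacity γ^{1/2}_{Θ,+}(E) := sup{ μ(E) : μ positive, supp μ ⊆ E, P*μ ≤ 1 everywhere } satisfies γ^{1/2}_{Θ,+}(E) ≤ C · H^N_∞(E). -/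
/-!
Testing the potential at the point `2r` units of time above the centre `a` of a ball of
radius `r`: every point of the ball is seen from there at time distance `≥ r` and distance
`≤ 3r`, so the kernel is `≥ r/(3r)^{N+1}` on the ball and `P*μ ≤ 1` forces
`μ(B(a,r)) ≤ 3^{N+1} r^N`. A set of diameter `d` lies in balls of any radius `> d`, hence
`μ(A) ≤ 3^{N+1} diam(A)^N`, and summing over a cover gives `μ(E) ≤ 3^{N+1} H^N_∞(E)`.
-/

open MeasureTheory
open scoped ENNReal

/-- The `d`-dimensional Hausdorff content: `H^d_∞(E) = inf { Σ diam(Aᵢ)^d : E ⊆ ⋃ Aᵢ }`. -/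
noncomputable def hContent {X : Type*} [EMetricSpace X] (d : ℝ) (E : Set X) : ℝ≥0∞ :=
  ⨅ (A : ℕ → Set X) (_ : E ⊆ ⋃ n, A n), ∑' n, EMetric.diam (A n) ^ d

open Filter Topology

namespace HeatPotential

variable {N : ℕ}

lemma inv_le_PH_of_mem_closedBall {a y : EuclideanSpace ℝ (Fin (N + 1))} {r : ℝ} (hr : 0 < r)
    (hy : y ∈ Metric.closedBall a r) :
    (3 ^ (N + 1) * r ^ N)⁻¹ ≤
      PH N (a + (2 * r) • EuclideanSpace.single (Fin.last N) 1 - y) := by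
  set z := a + (2 * r) • EuclideanSpace.single (Fin.last N) (1 : ℝ) - y
  have hay : ‖a - y‖ ≤ r := by rwa [← dist_eq_norm, dist_comm]
  have htime : r ≤ z (Fin.last N) := by
    have hcoord : |(a - y) (Fin.last N)| ≤ r :=
      (PiLp.norm_apply_le (a - y) (Fin.last N)).trans hay
    have : z (Fin.last N) = 2 * r + (a - y) (Fin.last N) := by simp [z]; ring
    linarith [(abs_le.mp hcoord).1]
  have hnorm : ‖z‖ ≤ 3 * r := by
    have : z = (2 * r) • EuclideanSpace.single (Fin.last N) (1 : ℝ) + (a - y) := by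
      simp only [z]; abel
    calc ‖z‖ ≤ 2 * r + ‖a - y‖ := by
          rw [this]; refine (norm_add_le _ _).trans ?_
          simp [norm_smul, abs_of_pos hr]
      _ ≤ 3 * r := by linarith
  calc (3 ^ (N + 1) * r ^ N)⁻¹ = r / (3 * r) ^ (N + 1) := by field_simp; ring
    _ ≤ z (Fin.last N) / ‖z‖ ^ (N + 1) :=
        div_le_div₀ (hr.le.trans htime) htime (pow_pos (hr.trans_le (htime.trans
          ((le_abs_self _).trans (PiLp.norm_apply_le z _)))) _)
          (pow_le_pow_left₀ (norm_nonneg z) hnorm _)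
    _ = PH N z := by rw [PH, if_pos (hr.trans_le htime)]

variable {μ : Measure (EuclideanSpace ℝ (Fin (N + 1)))}
  (hμ : ∀ x, (∫⁻ y, ENNReal.ofReal (PH N (x - y)) ∂μ) ≤ 1)
include hμ

lemma measure_closedBall_le (a : EuclideanSpace ℝ (Fin (N + 1))) {r : ℝ} (hr : 0 < r) :
    μ (Metric.closedBall a r) ≤ ENNReal.ofReal (3 ^ (N + 1) * r ^ N) := by
  set c : ℝ := 3 ^ (N + 1) * r ^ N
  have hc : 0 < c := by positivity
  set w := a + (2 * r) • EuclideanSpace.single (Fin.last N) (1 : ℝ)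
  have hmass : ENNReal.ofReal c⁻¹ * μ (Metric.closedBall a r) ≤ 1 :=
    calc ENNReal.ofReal c⁻¹ * μ (Metric.closedBall a r)
        = ∫⁻ _ in Metric.closedBall a r, ENNReal.ofReal c⁻¹ ∂μ := by
          rw [setLIntegral_const, mul_comm]
      _ ≤ ∫⁻ y in Metric.closedBall a r, ENNReal.ofReal (PH N (w - y)) ∂μ :=
          setLIntegral_mono' measurableSet_closedBall fun y hy =>
            ENNReal.ofReal_le_ofReal (inv_le_PH_of_mem_closedBall hr hy)
      _ ≤ ∫⁻ y, ENNReal.ofReal (PH N (w - y)) ∂μ := setLIntegral_le_lintegral _ _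
      _ ≤ 1 := hμ w
  rwa [ENNReal.ofReal_inv_of_pos hc, mul_comm, ← div_eq_mul_inv,
    ENNReal.div_le_iff (ENNReal.ofReal_pos.2 hc).ne' ENNReal.ofReal_ne_top, one_mul] at hmass

lemma measure_le_ediam_pow (hN : 1 ≤ N) (A : Set (EuclideanSpace ℝ (Fin (N + 1)))) :
    μ A ≤ ENNReal.ofReal (3 ^ (N + 1)) * Metric.ediam A ^ (N : ℝ) := by
  rcases A.eq_empty_or_nonempty with rfl | ⟨a, ha⟩
  · simp
  rcases eq_or_ne (Metric.ediam A) ∞ with hinf | hfin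
  · rw [hinf, ENNReal.top_rpow_of_pos (by exact_mod_cast hN),
      ENNReal.mul_top (by simp)]
    exact le_top
  set d := Metric.diam A
  have hball : ∀ r ∈ Set.Ioi d, μ A ≤ ENNReal.ofReal (3 ^ (N + 1) * r ^ N) := fun r hr =>
    (measure_mono fun y hy => (Metric.dist_le_diam_of_mem' hfin hy ha).trans hr.out.le).trans
      (measure_closedBall_le hμ a (Metric.diam_nonneg.trans_lt hr))
  have hlim : Tendsto (fun r : ℝ => ENNReal.ofReal (3 ^ (N + 1) * r ^ N)) (𝓝[>] d)
      (𝓝 (ENNReal.ofReal (3 ^ (N + 1) * d ^ N))) :=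
    (ENNReal.continuous_ofReal.comp (by fun_prop)).continuousWithinAt.tendsto
  calc μ A ≤ ENNReal.ofReal (3 ^ (N + 1) * d ^ N) :=
        ge_of_tendsto hlim (eventually_nhdsWithin_of_forall hball)
    _ = _ := by
        rw [ENNReal.ofReal_mul (by positivity), ENNReal.ofReal_pow Metric.diam_nonneg,
          Metric.diam, ENNReal.ofReal_toReal hfin, ENNReal.rpow_natCast]

lemma measure_le_hContent (hN : 1 ≤ N) (E : Set (EuclideanSpace ℝ (Fin (N + 1)))) :
    μ E ≤ ENNReal.ofReal (3 ^ (N + 1)) * hContent N E := by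
  have hC : ENNReal.ofReal (3 ^ (N + 1)) ≠ 0 := by simp
  simp only [hContent, ENNReal.mul_iInf_of_ne hC ENNReal.ofReal_ne_top]
  refine le_iInf₂ fun A hA => ?_
  calc μ E ≤ ∑' n, μ (A n) := measure_mono hA |>.trans (measure_iUnion_le A)
    _ ≤ ∑' n, ENNReal.ofReal (3 ^ (N + 1)) * Metric.ediam (A n) ^ (N : ℝ) :=
        ENNReal.tsum_le_tsum fun n => measure_le_ediam_pow hμ hN (A n)
    _ = _ := ENNReal.tsum_mul_left

end HeatPotential

/-- For `N ≥ 1` there is `C > 0`, depending only on `N`, such that for every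
compact `E ⊆ ℝ^{N+1}` and every positive measure `μ` supported on `E` with potential
`P*μ ≤ 1` everywhere, `μ(E) ≤ C·H^N_∞(E)`; in particular the capacity
`γ^{1/2}_{Θ,+}(E) = sup{μ(E)}` satisfies `γ^{1/2}_{Θ,+}(E) ≤ C·H^N_∞(E)`. -/
theorem stmt8 (N : ℕ) (hN : 1 ≤ N) :
    ∃ C : ℝ, 0 < C ∧
      ∀ E : Set (EuclideanSpace ℝ (Fin (N + 1))), IsCompact E →
        (∀ μ : Measure (EuclideanSpace ℝ (Fin (N + 1))), μ Eᶜ = 0 →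
          (∀ x, (∫⁻ y, ENNReal.ofReal (PH N (x - y)) ∂μ) ≤ 1) →
          μ E ≤ ENNReal.ofReal C * hContent (N : ℝ) E) ∧
        sSup {m : ℝ≥0∞ | ∃ μ : Measure (EuclideanSpace ℝ (Fin (N + 1))), μ Eᶜ = 0 ∧
            (∀ x, (∫⁻ y, ENNReal.ofReal (PH N (x - y)) ∂μ) ≤ 1) ∧ m = μ E} ≤
          ENNReal.ofReal C * hContent (N : ℝ) E := by
  refine ⟨3 ^ (N + 1), by positivity, fun E _ => ⟨fun μ _ hμ => ?_, sSup_le ?_⟩⟩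
  · exact HeatPotential.measure_le_hContent hμ hN E
  · rintro m ⟨μ, -, hμ, rfl⟩
    exact HeatPotential.measure_le_hContent hμ hN E
end

section
/- Let N ≥ 1 and let λ = 2^{-(N+1)/N}. For each vertex v of the unit cube [0,1]^{N+1} (there are 2^{N+1} of them) define the contraction f_v : ℝ^{N+1} → ℝ^{N+1} by f_v(x̄) = λ x̄ + (1 − λ) v. For k ≥ 0, let E_k be the union over all words w = (v_1, …, v_k) of length k of the sets f_{v_1} ∘ ⋯ ∘ f_{v_k}([0,1]^{N+1}) (with E_0 = [0,1]^{N+1}), and let E = ⋂_{k ≥ 0} E_k. Then 0 < H^N(E) < ∞, where H^N is the N-dimensional Hausdorff measure on ℝ^{N+1}. -/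
open MeasureTheory
open scoped ENNReal

/-- The contraction ratio `λ = 2^{-(N+1)/N}`. -/
noncomputable def lam (N : ℕ) : ℝ := (2 : ℝ) ^ (-(((N : ℝ) + 1) / (N : ℝ)))

/-- The vertex of `[0,1]^{N+1}` encoded by `σ : Fin (N+1) → Bool`. -/
noncomputable def cornerVec (N : ℕ) (σ : Fin (N + 1) → Bool) :
    EuclideanSpace ℝ (Fin (N + 1)) :=
  (WithLp.equiv 2 (Fin (N + 1) → ℝ)).symm fun i => if σ i then 1 else 0

/-- The contraction `f_v(x̄) = λ x̄ + (1 − λ) v` towards the vertex `v = cornerVec N σ`. -/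
noncomputable def cantorF (N : ℕ) (σ : Fin (N + 1) → Bool)
    (z : EuclideanSpace ℝ (Fin (N + 1))) : EuclideanSpace ℝ (Fin (N + 1)) :=
  lam N • z + (1 - lam N) • cornerVec N σ

/-- The unit cube `[0,1]^{N+1}`. -/
def unitCube (N : ℕ) : Set (EuclideanSpace ℝ (Fin (N + 1))) :=
  {z | ∀ i, z i ∈ Set.Icc (0 : ℝ) 1}

/-- The cube `Q_w = f_{v₁} ∘ ⋯ ∘ f_{v_k}([0,1]^{N+1})` for a word `w = (v₁,…,v_k)`. -/
noncomputable def cantorCube (N : ℕ) :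
    (k : ℕ) → (Fin k → (Fin (N + 1) → Bool)) → Set (EuclideanSpace ℝ (Fin (N + 1)))
  | 0, _ => unitCube N
  | k + 1, w => cantorF N (w 0) '' cantorCube N k (fun i => w i.succ)

/-- The union `E_k` of all cubes of generation `k`. -/
noncomputable def cantorEk (N k : ℕ) : Set (EuclideanSpace ℝ (Fin (N + 1))) :=
  ⋃ w : Fin k → (Fin (N + 1) → Bool), cantorCube N k w

/-- The corner Cantor set `E = ⋂_k E_k`. -/
noncomputable def cantorE (N : ℕ) : Set (EuclideanSpace ℝ (Fin (N + 1))) :=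
  ⋂ k, cantorEk N k

/-!
Since `2^{N+1} λ^N = 1`, covering `E` by the `2^{k(N+1)}` cubes of generation `k`, each of
diameter `√(N+1) λ^k`, gives `H^N(E) ≤ (N+1)^{N/2}`.

For the lower bound, push the uniform Bernoulli measure on addresses `ℕ → {0,1}^{N+1}` forward to
`E` by `g ↦ ∑ⱼ (1 - λ) λ^j v_{g j}`. As `λ < 1/2`, distinct cubes of generation `m + 1` are
`(1 - 2λ) λ^m` apart, so a set of diameter about `λ^{m+1}` charges a single cylinder of length
`m + 1`, of mass `2^{-(N+1)(m+1)} = λ^{N(m+1)}`; the mass distribution principle concludes.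
-/

open MeasureTheory Metric Filter Topology ProbabilityTheory

/-- Mass distribution principle on the geometric scales `c ρ^m`. -/
theorem smul_le_hausdorffMeasure_of_forall_ediam_le {X : Type*} [EMetricSpace X]
    [MeasurableSpace X] [BorelSpace X] (μ : Measure X) {d c ρ : ℝ} (hd : 0 < d) (hc : 0 < c)
    (hρ0 : 0 < ρ) (hρ1 : ρ < 1)
    (hμ : ∀ (m : ℕ) (s : Set X), ediam s ≤ ENNReal.ofReal (c * ρ ^ m) →
      μ s ≤ ENNReal.ofReal (ρ ^ (m + 1)) ^ d) :
    ENNReal.ofReal c ^ d • μ ≤ μH[d] := by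
  refine Measure.le_hausdorffMeasure d _ (ENNReal.ofReal c) (ENNReal.ofReal_pos.mpr hc)
    fun s hs => ?_
  rw [Measure.smul_apply, smul_eq_mul]
  rcases (zero_le : 0 ≤ ediam s).eq_or_lt with hs0 | hs0
  · have hlim : Tendsto (fun m : ℕ => ENNReal.ofReal (ρ ^ (m + 1)) ^ d) atTop (𝓝 0) := by
      have h : Tendsto (fun m : ℕ => ENNReal.ofReal (ρ ^ (m + 1))) atTop (𝓝 0) := by
        simpa using ENNReal.tendsto_ofReal ((tendsto_pow_atTop_nhds_zero_of_lt_one hρ0.le hρ1).comp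
          (tendsto_add_atTop_nat 1))
      simpa [Function.comp_def, ENNReal.zero_rpow_of_pos hd] using
        ((ENNReal.continuous_rpow_const (y := d)).tendsto 0).comp h
    have hμs : μ s = 0 := le_antisymm (ge_of_tendsto' hlim fun m =>
      hμ m s (by simp [← hs0])) zero_le
    simp [hμs]
  have hs_top : ediam s ≠ ⊤ := ne_top_of_le_ne_top ENNReal.ofReal_ne_top hs
  obtain ⟨δ, hδ0, hδ⟩ : ∃ δ : ℝ, 0 < δ ∧ ediam s = ENNReal.ofReal δ :=
    ⟨(ediam s).toReal, ENNReal.toReal_pos hs0.ne' hs_top, (ENNReal.ofReal_toReal hs_top).symm⟩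
  rw [hδ] at hs ⊢
  have hδc : δ ≤ c := (ENNReal.ofReal_le_ofReal_iff hc.le).mp hs
  obtain ⟨n, hn1, hn⟩ := exists_nat_pow_near_of_lt_one (div_pos hδ0 hc)
    ((div_le_one hc).mpr hδc) hρ0 hρ1
  calc ENNReal.ofReal c ^ d * μ s
      ≤ ENNReal.ofReal c ^ d * ENNReal.ofReal (ρ ^ (n + 1)) ^ d := by
        gcongr
        exact hμ n s (hδ ▸ ENNReal.ofReal_le_ofReal (by rwa [div_le_iff₀' hc] at hn))
    _ = ENNReal.ofReal (c * ρ ^ (n + 1)) ^ d := by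
        rw [← ENNReal.mul_rpow_of_nonneg _ _ hd.le, ENNReal.ofReal_mul hc.le]
    _ ≤ ENNReal.ofReal δ ^ d := by
        gcongr
        rw [lt_div_iff₀' hc] at hn1
        exact hn1.le

lemma infinitePi_uniformOn_cylinder {α : Type*} [Fintype α] [Nonempty α] [MeasurableSpace α]
    [MeasurableSingletonClass α] (k : ℕ) (g₀ : ℕ → α) :
    Measure.infinitePi (fun _ : ℕ => uniformOn (Set.univ : Set α)) {g | ∀ j < k, g j = g₀ j}
      = (Fintype.card α : ℝ≥0∞)⁻¹ ^ k := by
  have hcyl : {g : ℕ → α | ∀ j < k, g j = g₀ j} = Set.pi (Finset.range k) fun j => {g₀ j} := by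
    ext g; simp
  rw [hcyl, Measure.infinitePi_pi (μ := fun _ : ℕ => uniformOn (Set.univ : Set α))
    fun _ _ => measurableSet_singleton _]
  simp [uniformOn_univ]

section CornerCantor

variable {N : ℕ}

lemma lam_pos (N : ℕ) : 0 < lam N := Real.rpow_pos_of_pos two_pos _

lemma lam_le_one (N : ℕ) : lam N ≤ 1 :=
  Real.rpow_le_one_of_one_le_of_nonpos one_le_two (neg_nonpos.mpr (by positivity))

lemma lam_lt_half (hN : 1 ≤ N) : lam N < 1 / 2 := by
  have hN0 : (0 : ℝ) < N := by exact_mod_cast hN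
  have h1 : (1 : ℝ) < (N + 1) / N := by rw [lt_div_iff₀ hN0]; linarith
  calc lam N < (2 : ℝ) ^ (-1 : ℝ) := Real.rpow_lt_rpow_of_exponent_lt one_lt_two (by linarith)
    _ = 1 / 2 := by rw [Real.rpow_neg_one, one_div]

lemma lam_lt_one (hN : 1 ≤ N) : lam N < 1 := (lam_lt_half hN).trans (by norm_num)

lemma two_pow_mul_lam_pow (hN : 1 ≤ N) : (2 : ℝ) ^ (N + 1) * lam N ^ N = 1 := by
  have hN0 : (N : ℝ) ≠ 0 := by positivity
  rw [lam, ← Real.rpow_natCast _ N, ← Real.rpow_mul zero_le_two, neg_mul,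
    div_mul_cancel₀ _ hN0, Real.rpow_neg zero_le_two, ← Real.rpow_natCast]
  push_cast
  exact mul_inv_cancel₀ (by positivity)

lemma cantorF_apply (σ : Fin (N + 1) → Bool) (z : EuclideanSpace ℝ (Fin (N + 1)))
    (i : Fin (N + 1)) :
    cantorF N σ z i = lam N * z i + (1 - lam N) * (if σ i then 1 else 0) := by
  simp [cantorF, cornerVec]

lemma dist_cantorF (σ : Fin (N + 1) → Bool) (z z' : EuclideanSpace ℝ (Fin (N + 1))) :
    dist (cantorF N σ z) (cantorF N σ z') = lam N * dist z z' := by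
  rw [dist_eq_norm, dist_eq_norm, cantorF, cantorF, add_sub_add_right_eq_sub, ← smul_sub,
    norm_smul, Real.norm_of_nonneg (lam_pos N).le]

lemma cantorF_mem_unitCube (σ : Fin (N + 1) → Bool)
    {z : EuclideanSpace ℝ (Fin (N + 1))} (hz : z ∈ unitCube N) : cantorF N σ z ∈ unitCube N := by
  intro i
  have hl := lam_pos N
  have hl1 := lam_le_one N
  obtain ⟨h0, h1⟩ := hz i
  rw [cantorF_apply]
  split_ifs <;> constructor <;> nlinarith

lemma one_sub_two_mul_lam_le_dist_cantorF {σ σ' : Fin (N + 1) → Bool} (h : σ ≠ σ')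
    {z z' : EuclideanSpace ℝ (Fin (N + 1))} (hz : z ∈ unitCube N) (hz' : z' ∈ unitCube N) :
    1 - 2 * lam N ≤ dist (cantorF N σ z) (cantorF N σ' z') := by
  obtain ⟨i, hi⟩ := Function.ne_iff.mp h
  have hl := lam_pos N
  obtain ⟨h0, h1⟩ := hz i
  obtain ⟨h0', h1'⟩ := hz' i
  refine le_trans ?_ (PiLp.dist_apply_le _ _ i)
  rw [Real.dist_eq, cantorF_apply, cantorF_apply, le_abs]
  cases hσ : σ i <;> cases hσ' : σ' i <;> simp [hσ, hσ'] at hi ⊢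
  · right; nlinarith
  · left; nlinarith

lemma dist_le_of_mem_unitCube {z z' : EuclideanSpace ℝ (Fin (N + 1))} (hz : z ∈ unitCube N)
    (hz' : z' ∈ unitCube N) : dist z z' ≤ √(N + 1) := by
  rw [EuclideanSpace.dist_eq]
  gcongr
  calc ∑ i, dist (z i) (z' i) ^ 2 ≤ ∑ _i : Fin (N + 1), (1 : ℝ) := by
        gcongr with i
        have := hz i; have := hz' i
        rw [Real.dist_eq, sq_abs]
        simp only [Set.mem_Icc] at *
        nlinarith
    _ = N + 1 := by simp

lemma cantorCube_subset_unitCube (k : ℕ) (w : Fin k → Fin (N + 1) → Bool) :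
    cantorCube N k w ⊆ unitCube N := by
  induction k with
  | zero => exact subset_rfl
  | succ k ih =>
    rintro _ ⟨z, hz, rfl⟩
    exact cantorF_mem_unitCube _ (ih _ hz)

lemma dist_le_of_mem_cantorCube {k : ℕ} {w : Fin k → Fin (N + 1) → Bool}
    {z z' : EuclideanSpace ℝ (Fin (N + 1))} (hz : z ∈ cantorCube N k w)
    (hz' : z' ∈ cantorCube N k w) : dist z z' ≤ √(N + 1) * lam N ^ k := by
  induction k generalizing z z' with
  | zero => simpa using dist_le_of_mem_unitCube hz hz'
  | succ k ih =>
    obtain ⟨y, hy, rfl⟩ := hz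
    obtain ⟨y', hy', rfl⟩ := hz'
    rw [dist_cantorF, pow_succ', mul_left_comm]
    exact mul_le_mul_of_nonneg_left (ih hy hy') (lam_pos N).le

/-- Two cubes separate at the first letter where their words differ; the common prefix before it
scales distances by `λ`. -/
lemma le_dist_of_mem_cantorCube (hN : 1 ≤ N) {k : ℕ} {w w' : Fin (k + 1) → Fin (N + 1) → Bool}
    (hw : w ≠ w') {z z' : EuclideanSpace ℝ (Fin (N + 1))} (hz : z ∈ cantorCube N (k + 1) w)
    (hz' : z' ∈ cantorCube N (k + 1) w') : (1 - 2 * lam N) * lam N ^ k ≤ dist z z' := by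
  have hl := lam_pos N
  have hsep : 0 ≤ 1 - 2 * lam N := by linarith [lam_lt_half hN]
  induction k generalizing z z' with
  | zero =>
    have h0 : w 0 ≠ w' 0 := fun h => hw (funext fun j => Fin.fin_one_eq_zero j ▸ h)
    obtain ⟨y, hy, rfl⟩ := hz
    obtain ⟨y', hy', rfl⟩ := hz'
    simpa using one_sub_two_mul_lam_le_dist_cantorF h0 hy hy'
  | succ k ih =>
    obtain ⟨y, hy, rfl⟩ := hz
    obtain ⟨y', hy', rfl⟩ := hz'
    by_cases h0 : w 0 = w' 0
    · have htail : Fin.tail w ≠ Fin.tail w' := fun h =>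
        hw (funext fun j => Fin.cases h0 (fun j => congrFun h j) j)
      rw [h0, dist_cantorF, pow_succ', mul_left_comm]
      exact mul_le_mul_of_nonneg_left (ih htail hy hy') hl.le
    · calc (1 - 2 * lam N) * lam N ^ (k + 1) ≤ 1 - 2 * lam N :=
            mul_le_of_le_one_right hsep (pow_le_one₀ hl.le (lam_le_one N))
        _ ≤ _ := one_sub_two_mul_lam_le_dist_cantorF h0 (cantorCube_subset_unitCube _ _ hy)
            (cantorCube_subset_unitCube _ _ hy')

lemma ediam_cantorCube_le (k : ℕ) (w : Fin k → Fin (N + 1) → Bool) :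
    ediam (cantorCube N k w) ≤ ENNReal.ofReal (√(N + 1) * lam N ^ k) :=
  ediam_le fun _ hz _ hz' => by
    rw [edist_dist]
    exact ENNReal.ofReal_le_ofReal (dist_le_of_mem_cantorCube hz hz')

lemma sum_ediam_cantorCube_rpow_le (hN : 1 ≤ N) (k : ℕ) :
    ∑ w : Fin k → Fin (N + 1) → Bool, ediam (cantorCube N k w) ^ (N : ℝ)
      ≤ ENNReal.ofReal (√(N + 1) ^ N) := by
  have hcard : (Fintype.card (Fin k → Fin (N + 1) → Bool) : ℝ) = ((2 : ℝ) ^ (N + 1)) ^ k := by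
    simp
  calc ∑ w : Fin k → Fin (N + 1) → Bool, ediam (cantorCube N k w) ^ (N : ℝ)
      ≤ ∑ _w : Fin k → Fin (N + 1) → Bool, ENNReal.ofReal (√(N + 1) * lam N ^ k) ^ (N : ℝ) := by
        gcongr with w
        exact ediam_cantorCube_le k w
    _ = ENNReal.ofReal
          (Fintype.card (Fin k → Fin (N + 1) → Bool) * (√(N + 1) * lam N ^ k) ^ N) := by
        rw [Finset.sum_const, Finset.card_univ, nsmul_eq_mul,
          ENNReal.ofReal_rpow_of_nonneg (by have := lam_pos N; positivity) N.cast_nonneg,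
          Real.rpow_natCast, ENNReal.ofReal_mul (Nat.cast_nonneg _), ENNReal.ofReal_natCast]
    _ = ENNReal.ofReal (√(N + 1) ^ N) := by
        have hmass : ((2 : ℝ) ^ (N + 1)) ^ k * (lam N ^ k) ^ N = 1 := by
          rw [pow_right_comm _ k N, ← mul_pow, two_pow_mul_lam_pow hN, one_pow]
        rw [hcard]
        congr 1
        linear_combination √(N + 1) ^ N * hmass

theorem hausdorffMeasure_cantorE_le (hN : 1 ≤ N) :
    μH[(N : ℝ)] (cantorE N) ≤ ENNReal.ofReal (√(N + 1) ^ N) := by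
  have hr : Tendsto (fun k : ℕ => ENNReal.ofReal (√(N + 1) * lam N ^ k)) atTop (𝓝 0) := by
    simpa using ENNReal.tendsto_ofReal ((tendsto_pow_atTop_nhds_zero_of_lt_one (lam_pos N).le
      (lam_lt_one hN)).const_mul √(N + 1))
  refine (Measure.hausdorffMeasure_le_liminf_sum _ _ _ hr (cantorCube N)
    (.of_forall fun k => ediam_cantorCube_le k)
    (.of_forall fun k => Set.iInter_subset _ k)).trans ?_
  exact liminf_le_of_frequently_le' (.of_forall (sum_ediam_cantorCube_rpow_le hN))

noncomputable def cantorCoding (N : ℕ) (g : ℕ → Fin (N + 1) → Bool) :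
    EuclideanSpace ℝ (Fin (N + 1)) :=
  ∑' j, ((1 - lam N) * lam N ^ j) • cornerVec N (g j)

lemma cornerVec_mem_unitCube (σ : Fin (N + 1) → Bool) : cornerVec N σ ∈ unitCube N := by
  intro i
  by_cases h : σ i <;> simp [cornerVec, h]

lemma norm_cornerVec_le (σ : Fin (N + 1) → Bool) : ‖cornerVec N σ‖ ≤ √(N + 1) := by
  simpa using dist_le_of_mem_unitCube (cornerVec_mem_unitCube σ) (z' := 0) fun _ => by simp

lemma norm_cantorCoding_term_le (hN : 1 ≤ N) (σ : Fin (N + 1) → Bool) (j : ℕ) :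
    ‖((1 - lam N) * lam N ^ j) • cornerVec N σ‖ ≤ (1 - lam N) * √(N + 1) * lam N ^ j := by
  have := lam_pos N
  have := lam_lt_one hN
  rw [norm_smul, Real.norm_of_nonneg (by nlinarith [pow_pos (lam_pos N) j]), mul_right_comm]
  gcongr
  exact norm_cornerVec_le σ

lemma summable_cantorCoding (hN : 1 ≤ N) (g : ℕ → Fin (N + 1) → Bool) :
    Summable fun j => ((1 - lam N) * lam N ^ j) • cornerVec N (g j) :=
  .of_norm_bounded ((summable_geometric_of_lt_one (lam_pos N).le (lam_lt_one hN)).mul_left _)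
    fun j => norm_cantorCoding_term_le hN (g j) j

lemma continuous_cantorCoding (hN : 1 ≤ N) : Continuous (cantorCoding N) :=
  continuous_tsum (fun j => continuous_const.fun_smul
      ((continuous_of_discreteTopology (f := cornerVec N)).comp (continuous_apply j)))
    ((summable_geometric_of_lt_one (lam_pos N).le (lam_lt_one hN)).mul_left _)
    fun j g => norm_cantorCoding_term_le hN (g j) j

lemma cantorCoding_eq_cantorF (hN : 1 ≤ N) (g : ℕ → Fin (N + 1) → Bool) :
    cantorCoding N g = cantorF N (g 0) (cantorCoding N fun j => g (j + 1)) := by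
  have hshift : ∀ j, ((1 - lam N) * lam N ^ (j + 1)) • cornerVec N (g (j + 1))
      = lam N • (((1 - lam N) * lam N ^ j) • cornerVec N (g (j + 1))) := fun j => by
    rw [smul_smul]; ring_nf
  rw [cantorCoding, (summable_cantorCoding hN g).tsum_eq_zero_add, cantorF, cantorCoding,
    tsum_congr hshift, (summable_cantorCoding hN _).tsum_const_smul, pow_zero, mul_one]
  exact add_comm _ _

lemma hasSum_cantorCoding_apply (hN : 1 ≤ N) (g : ℕ → Fin (N + 1) → Bool) (i : Fin (N + 1)) :
    HasSum (fun j => (1 - lam N) * lam N ^ j * (if g j i then 1 else 0)) (cantorCoding N g i) := by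
  have h := (EuclideanSpace.proj i).hasSum (summable_cantorCoding hN g).hasSum
  rw [← cantorCoding] at h
  simpa [cornerVec] using h

lemma cantorCoding_mem_unitCube (hN : 1 ≤ N) (g : ℕ → Fin (N + 1) → Bool) :
    cantorCoding N g ∈ unitCube N := by
  intro i
  have hl := lam_pos N
  have hl1 := lam_lt_one hN
  have hgeom : HasSum (fun j => (1 - lam N) * lam N ^ j) 1 := by
    simpa [mul_inv_cancel₀ (sub_pos.mpr hl1).ne'] using
      (hasSum_geometric_of_lt_one hl.le hl1).mul_left (1 - lam N)
  have hterm : ∀ j, 0 ≤ (1 - lam N) * lam N ^ j * (if g j i then 1 else 0) := fun j => by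
    have := pow_pos hl j
    split_ifs <;> nlinarith
  refine ⟨(hasSum_cantorCoding_apply hN g i).nonneg hterm,
    hasSum_le (fun j => ?_) (hasSum_cantorCoding_apply hN g i) hgeom⟩
  have := pow_pos hl j
  split_ifs <;> nlinarith

lemma cantorCoding_mem_cantorCube (hN : 1 ≤ N) (g : ℕ → Fin (N + 1) → Bool) (k : ℕ) :
    cantorCoding N g ∈ cantorCube N k fun j => g j := by
  induction k generalizing g with
  | zero => exact cantorCoding_mem_unitCube hN g
  | succ k ih => exact ⟨_, ih fun j => g (j + 1), (cantorCoding_eq_cantorF hN g).symm⟩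

lemma cantorCoding_mem_cantorE (hN : 1 ≤ N) (g : ℕ → Fin (N + 1) → Bool) :
    cantorCoding N g ∈ cantorE N :=
  Set.mem_iInter.mpr fun k => Set.mem_iUnion.mpr ⟨_, cantorCoding_mem_cantorCube hN g k⟩

noncomputable def cantorMeasure (N : ℕ) : Measure (EuclideanSpace ℝ (Fin (N + 1))) :=
  (Measure.infinitePi fun _ : ℕ => uniformOn (Set.univ : Set (Fin (N + 1) → Bool))).map
    (cantorCoding N)

lemma one_le_cantorMeasure_cantorE (hN : 1 ≤ N) : 1 ≤ cantorMeasure N (cantorE N) := by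
  refine le_of_eq_of_le ?_ (Measure.le_map_apply (continuous_cantorCoding hN).aemeasurable _)
  rw [Set.preimage_eq_univ_iff.mpr (Set.range_subset_iff.mpr (cantorCoding_mem_cantorE hN)),
    measure_univ]

lemma ofReal_lam_pow (hN : 1 ≤ N) : ENNReal.ofReal (lam N ^ N) = ((2 : ℝ≥0∞) ^ (N + 1))⁻¹ := by
  rw [eq_inv_of_mul_eq_one_right (two_pow_mul_lam_pow hN),
    ENNReal.ofReal_inv_of_pos (by positivity),
    ENNReal.ofReal_pow zero_le_two, ENNReal.ofReal_ofNat]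

lemma eq_of_dist_cantorCoding_lt (hN : 1 ≤ N) {m : ℕ} {g g' : ℕ → Fin (N + 1) → Bool}
    (h : dist (cantorCoding N g) (cantorCoding N g') < (1 - 2 * lam N) * lam N ^ m) :
    ∀ j < m + 1, g j = g' j := by
  by_contra! hne
  obtain ⟨j, hj, hgj⟩ := hne
  have hw : (fun i : Fin (m + 1) => g i) ≠ fun i : Fin (m + 1) => g' i :=
    fun hw => hgj (congrFun hw ⟨j, hj⟩)
  exact h.not_ge (le_dist_of_mem_cantorCube hN hw (cantorCoding_mem_cantorCube hN g _)
    (cantorCoding_mem_cantorCube hN g' _))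

/-- Such a set meets the image of only one cylinder of length `m + 1`, which has mass
`2^{-(N+1)(m+1)} = λ^{N(m+1)}`. -/
lemma cantorMeasure_le_of_ediam_lt (hN : 1 ≤ N) (m : ℕ) (s : Set (EuclideanSpace ℝ (Fin (N + 1))))
    (hs : ediam s < ENNReal.ofReal ((1 - 2 * lam N) * lam N ^ m)) :
    cantorMeasure N s ≤ ENNReal.ofReal (lam N ^ (m + 1)) ^ (N : ℝ) := by
  set P := Measure.infinitePi fun _ : ℕ => uniformOn (Set.univ : Set (Fin (N + 1) → Bool))
  have hclosure : cantorMeasure N s ≤ P (cantorCoding N ⁻¹' closure s) :=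
    (measure_mono subset_closure).trans_eq
      (Measure.map_apply (continuous_cantorCoding hN).measurable isClosed_closure.measurableSet)
  rcases (cantorCoding N ⁻¹' closure s).eq_empty_or_nonempty with hempty | ⟨g₀, hg₀⟩
  · simp [hempty] at hclosure
    simp [hclosure]
  have hcyl : cantorCoding N ⁻¹' closure s ⊆ {g | ∀ j < m + 1, g j = g₀ j} := fun g hg =>
    eq_of_dist_cantorCoding_lt hN <| (ENNReal.ofReal_lt_ofReal_iff_of_nonneg dist_nonneg).mp <| by
      rw [← edist_dist]
      exact (edist_le_ediam_of_mem (x := cantorCoding N g) hg hg₀).trans_lt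
        ((ediam_closure s).trans_lt hs)
  calc cantorMeasure N s ≤ P {g | ∀ j < m + 1, g j = g₀ j} := hclosure.trans (measure_mono hcyl)
    _ = ENNReal.ofReal (lam N ^ (m + 1)) ^ (N : ℝ) := by
      have hl := (lam_pos N).le
      rw [infinitePi_uniformOn_cylinder,
        ENNReal.ofReal_rpow_of_nonneg (by positivity) N.cast_nonneg, Real.rpow_natCast, pow_right_comm, ENNReal.ofReal_pow (by positivity), ofReal_lam_pow hN]
      simp

theorem hausdorffMeasure_cantorE_pos (hN : 1 ≤ N) : 0 < μH[(N : ℝ)] (cantorE N) := by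
  have hl := lam_pos N
  have hsep : 0 < 1 - 2 * lam N := by linarith [lam_lt_half hN]
  have hscale (m : ℕ) : (1 - 2 * lam N) * lam N * lam N ^ m < (1 - 2 * lam N) * lam N ^ m := by
    rw [mul_assoc, ← pow_succ']
    exact mul_lt_mul_of_pos_left (pow_lt_pow_right_of_lt_one₀ hl (lam_lt_one hN) m.lt_succ_self)
      hsep
  have hle := smul_le_hausdorffMeasure_of_forall_ediam_le (cantorMeasure N)
    (by exact_mod_cast hN) (mul_pos hsep hl) hl (lam_lt_one hN) fun m s hs =>
      cantorMeasure_le_of_ediam_lt hN m s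
        (hs.trans_lt ((ENNReal.ofReal_lt_ofReal_iff (by positivity)).mpr (hscale m)))
  calc 0 < ENNReal.ofReal ((1 - 2 * lam N) * lam N) ^ (N : ℝ) := by positivity
    _ ≤ (ENNReal.ofReal ((1 - 2 * lam N) * lam N) ^ (N : ℝ) • cantorMeasure N) (cantorE N) := by
      rw [Measure.smul_apply, smul_eq_mul]
      exact le_mul_of_one_le_right' (one_le_cantorMeasure_cantorE hN)
    _ ≤ μH[(N : ℝ)] (cantorE N) := hle _

end CornerCantor

/-- the corner Cantor set in `ℝ^{N+1}` with ratio `2^{-(N+1)/N}` has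
positive and finite `N`-dimensional Hausdorff measure. -/
theorem stmt13 (N : ℕ) (hN : 1 ≤ N) :
    0 < μH[(N : ℝ)] (cantorE N) ∧ μH[(N : ℝ)] (cantorE N) < ⊤ :=
  ⟨hausdorffMeasure_cantorE_pos hN, (hausdorffMeasure_cantorE_le hN).trans_lt ENNReal.ofReal_lt_top⟩
end

section
/- Let L > 0 and let μ be the measure on ℝ² that is the image of Lebesgue measure on [0, L] under the map x ↦ (x, 0), i.e. the arc-length measure of the horizontal segment E₁ = { (x, 0) : 0 ≤ x ≤ L }. Then for every (a, σ) ∈ ℝ², ∫ P((a,σ) − (x',t')) dμ(x',t') ≤ π, where P is the planar 1/2-fractional heat kernel. In particular, the positive capacity γ^{1/2}_{Θ,+}(E₁) := sup{ ν(E₁) : ν positive, supp ν ⊆ E₁, ∫ P(z̄ − w̄) dν(w̄) ≤ 1 for all z̄ ∈ ℝ² } satisfies γ^{1/2}_{Θ,+}(E₁) ≥ L/π > 0. -/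
open MeasureTheory
open scoped ENNReal

/-- The planar (N = 1) 1/2-fractional heat kernel:
`P(x,t) = t/(t² + x²)` for `t > 0`, else `0`. -/
noncomputable def P1 (x t : ℝ) : ℝ := if 0 < t then t / (t ^ 2 + x ^ 2) else 0

/-- Arc-length measure of the horizontal segment `E₁ = [0,L] × {0}`: the image of
Lebesgue measure on `[0,L]` under `x ↦ (x,0)`. -/
noncomputable def segMeasure (L : ℝ) : Measure (ℝ × ℝ) :=
  Measure.map (fun x : ℝ => (x, (0 : ℝ))) (volume.restrict (Set.Icc 0 L))

/-- The horizontal segment `E₁ = {(x,0) : 0 ≤ x ≤ L}`. -/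
def E1 (L : ℝ) : Set (ℝ × ℝ) := (fun x : ℝ => (x, (0 : ℝ))) '' Set.Icc 0 L

lemma measurable_P1 : Measurable (fun p : ℝ × ℝ => P1 p.1 p.2) := by
  unfold P1
  exact Measurable.ite (measurableSet_lt measurable_const measurable_snd)
    (measurable_snd.div ((measurable_snd.pow_const 2).add (measurable_fst.pow_const 2)))
    measurable_const

lemma integrable_cauchy (σ : ℝ) (hσ : 0 < σ) :
    Integrable (fun u : ℝ => σ / (σ ^ 2 + u ^ 2)) := by
  have h : (fun u : ℝ => σ / (σ^2 + u^2)) = fun u : ℝ => σ⁻¹ * (1 + (u/σ)^2)⁻¹ := by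
    funext u; field_simp
  rw [h]
  exact (integrable_inv_one_add_sq.comp_div hσ.ne').const_mul _

lemma integral_cauchy (σ : ℝ) (hσ : 0 < σ) :
    ∫ u : ℝ, σ / (σ ^ 2 + u ^ 2) = Real.pi := by
  have h : (fun u : ℝ => σ / (σ^2 + u^2)) = fun u : ℝ => σ⁻¹ * (1 + (u/σ)^2)⁻¹ := by
    funext u; field_simp
  rw [h, integral_const_mul, MeasureTheory.Measure.integral_comp_div (fun x : ℝ => (1+x^2)⁻¹) σ,
    integral_univ_inv_one_add_sq, abs_of_pos hσ, smul_eq_mul]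
  field_simp

/-- The full-line lintegral of the Poisson kernel is `π`. -/
lemma lintegral_cauchy (a σ : ℝ) (hσ : 0 < σ) :
    (∫⁻ x : ℝ, ENNReal.ofReal (σ / (σ ^ 2 + (a - x) ^ 2))) = ENNReal.ofReal Real.pi := by
  have hint : Integrable (fun x : ℝ => σ / (σ ^ 2 + (a - x) ^ 2)) :=
    (integrable_cauchy σ hσ).comp_sub_left a
  rw [← ofReal_integral_eq_lintegral_ofReal hint
      (Filter.Eventually.of_forall fun x => by positivity)]
  congr 1
  rw [integral_sub_left_eq_self (fun u : ℝ => σ / (σ ^ 2 + u ^ 2)) volume a]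
  exact integral_cauchy σ hσ

lemma E1_eq (L : ℝ) : E1 L = Set.Icc 0 L ×ˢ ({0} : Set ℝ) := by
  ext p
  constructor
  · rintro ⟨x, hx, rfl⟩; exact ⟨hx, rfl⟩
  · rintro ⟨h1, h2⟩; exact ⟨p.1, h1, by ext <;> simp [h2.symm]⟩

lemma measurableSet_E1 (L : ℝ) : MeasurableSet (E1 L) := by
  rw [E1_eq]
  exact measurableSet_Icc.prod (measurableSet_singleton 0)

lemma segMeasure_apply_E1 (L : ℝ) (hL : 0 ≤ L) : segMeasure L (E1 L) = ENNReal.ofReal L := by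
  rw [segMeasure, Measure.map_apply (by fun_prop) (measurableSet_E1 L),
    Measure.restrict_apply (by
      exact (measurableSet_E1 L).preimage (by fun_prop))]
  have h : (fun x : ℝ => (x, (0 : ℝ))) ⁻¹' E1 L ∩ Set.Icc 0 L = Set.Icc 0 L := by
    apply Set.inter_eq_self_of_subset_right
    intro x hx
    exact ⟨x, hx, rfl⟩
  rw [h, Real.volume_Icc, sub_zero]

lemma segMeasure_compl_E1 (L : ℝ) : segMeasure L (E1 L)ᶜ = 0 := by
  rw [segMeasure, Measure.map_apply (by fun_prop) (measurableSet_E1 L).compl,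
    Measure.restrict_apply ((measurableSet_E1 L).compl.preimage (by fun_prop))]
  have h : (fun x : ℝ => (x, (0 : ℝ))) ⁻¹' (E1 L)ᶜ ∩ Set.Icc 0 L = ∅ := by
    ext x
    simp only [Set.mem_inter_iff, Set.mem_preimage, Set.mem_compl_iff, Set.mem_empty_iff_false,
      iff_false, not_and]
    intro hx hx'
    exact hx ⟨x, hx', rfl⟩
  rw [h, measure_empty]

/-- Key potential bound. -/
lemma potential_bound (L : ℝ) (a σ : ℝ) :
    (∫⁻ w : ℝ × ℝ, ENNReal.ofReal (P1 (a - w.1) (σ - w.2)) ∂segMeasure L) ≤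
      ENNReal.ofReal Real.pi := by
  have hmeas : Measurable (fun w : ℝ × ℝ => ENNReal.ofReal (P1 (a - w.1) (σ - w.2))) := by
    apply Measurable.ennreal_ofReal
    exact measurable_P1.comp
      ((measurable_const.sub measurable_fst).prodMk (measurable_const.sub measurable_snd))
  rw [segMeasure, lintegral_map hmeas (by fun_prop)]
  simp only [sub_zero]
  rcases le_or_gt σ 0 with hσ | hσ
  · have : ∀ x : ℝ, P1 (a - x) σ = 0 := fun x => if_neg (not_lt.2 hσ)
    simp only [this, ENNReal.ofReal_zero, lintegral_zero]
    positivity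
  · have h1 : ∀ x : ℝ, P1 (a - x) σ = σ / (σ ^ 2 + (a - x) ^ 2) := fun x => if_pos hσ
    simp only [h1]
    calc (∫⁻ x in Set.Icc 0 L, ENNReal.ofReal (σ / (σ ^ 2 + (a - x) ^ 2)))
        ≤ ∫⁻ x : ℝ, ENNReal.ofReal (σ / (σ ^ 2 + (a - x) ^ 2)) :=
          lintegral_mono' Measure.restrict_le_self le_rfl
      _ = ENNReal.ofReal Real.pi := lintegral_cauchy a σ hσ

/-- the potential of the arc-length measure of the horizontal segment
`E₁ = [0,L] × {0}` is bounded by `π` everywhere; in particular the positive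
1/2-fractional caloric capacity of `E₁` is at least `L/π > 0`. -/
theorem stmt15 (L : ℝ) (hL : 0 < L) :
    (∀ a σ : ℝ,
      (∫⁻ w : ℝ × ℝ, ENNReal.ofReal (P1 (a - w.1) (σ - w.2)) ∂segMeasure L) ≤
        ENNReal.ofReal Real.pi) ∧
    ENNReal.ofReal (L / Real.pi) ≤
      sSup {m : ℝ≥0∞ | ∃ ν : Measure (ℝ × ℝ), ν (E1 L)ᶜ = 0 ∧
        (∀ z : ℝ × ℝ,
          (∫⁻ w : ℝ × ℝ, ENNReal.ofReal (P1 (z.1 - w.1) (z.2 - w.2)) ∂ν) ≤ 1) ∧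
        m = ν (E1 L)} := by
  have hpi : (0 : ℝ) < Real.pi := Real.pi_pos
  have hpi0 : ENNReal.ofReal Real.pi ≠ 0 := by
    simpa using hpi
  have hpit : ENNReal.ofReal Real.pi ≠ ⊤ := ENNReal.ofReal_ne_top
  refine ⟨fun a σ => potential_bound L a σ, ?_⟩
  apply le_sSup
  refine ⟨(ENNReal.ofReal Real.pi)⁻¹ • segMeasure L, ?_, ?_, ?_⟩
  · simp [segMeasure_compl_E1 L]
  · intro z
    rw [lintegral_smul_measure]
    calc (ENNReal.ofReal Real.pi)⁻¹ *
          ∫⁻ w : ℝ × ℝ, ENNReal.ofReal (P1 (z.1 - w.1) (z.2 - w.2)) ∂segMeasure L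
        ≤ (ENNReal.ofReal Real.pi)⁻¹ * ENNReal.ofReal Real.pi :=
          mul_le_mul_right (potential_bound L z.1 z.2) _
      _ = 1 := ENNReal.inv_mul_cancel hpi0 hpit
  · rw [Measure.smul_apply, segMeasure_apply_E1 L hL.le, smul_eq_mul,
      ENNReal.ofReal_div_of_pos hpi, ENNReal.div_eq_inv_mul]
end
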